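/- With x_{0,·} = r/(β₁+1), x_{1,·} = (β₁/(α₁+β₁+1))·(r/(β₁+1) + (1-r)/β₁), and x_{w₁,·} = Γ(w₁+β₁/α₁)/Γ(β₁/α₁) · Γ(1+(β₁+1)/α₁)/Γ(w₁+1+(β₁+1)/α₁) · (1-r+β₁)/(β₁(β₁+1)) for w₁ > 1, we have ∑_{w₁=0}^∞ x_{w₁,·} = 1. -/
import Mathlib
open Real Filter Topology

lemma gautschi_base {δ x : ℝ} (hδ0 : 0 < δ) (hδ1 : δ ≤ 1) (hx : 2 ≤ x) :
    Real.Gamma x * (x - 1) ^ δ ≤ Real.Gamma (x + δ) := by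
  have hx0 : (0:ℝ) < x := by linarith
  have hxd : (0:ℝ) < x + δ := by linarith
  have hxd1 : (0:ℝ) < x + δ - 1 := by linarith
  have hconv := Real.convexOn_log_Gamma
  have hcomb := hconv.2 (Set.mem_Ioi.mpr hxd) (Set.mem_Ioi.mpr hxd1)
    (by linarith : (0:ℝ) ≤ 1 - δ) hδ0.le (by ring)
  have hpt : (1 - δ) • (x + δ) + δ • (x + δ - 1) = x := by
    simp [smul_eq_mul]; ring
  rw [hpt] at hcomb
  simp only [smul_eq_mul, Function.comp] at hcomb
  -- log Γ(x+δ-1) = log Γ(x+δ) - log (x+δ-1)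
  have hrec : Real.Gamma (x + δ) = (x + δ - 1) * Real.Gamma (x + δ - 1) := by
    have := Real.Gamma_add_one (s := x + δ - 1) (by positivity)
    rw [show x + δ - 1 + 1 = x + δ by ring] at this
    linarith [this]
  have hG1 : 0 < Real.Gamma (x + δ - 1) := Real.Gamma_pos_of_pos hxd1
  have hlog : Real.log (Real.Gamma (x + δ - 1)) =
      Real.log (Real.Gamma (x + δ)) - Real.log (x + δ - 1) := by
    rw [hrec, Real.log_mul (by positivity) hG1.ne']; ring
  rw [hlog] at hcomb
  have key : Real.log (Real.Gamma x) + δ * Real.log (x - 1) ≤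
      Real.log (Real.Gamma (x + δ)) := by
    have h1 : Real.log (x - 1) ≤ Real.log (x + δ - 1) :=
      Real.log_le_log (by linarith) (by linarith)
    nlinarith [h1]
  have h0 : 0 < Real.Gamma x := Real.Gamma_pos_of_pos hx0
  have h1 : 0 < (x - 1) ^ δ := Real.rpow_pos_of_pos (by linarith) δ
  calc Real.Gamma x * (x - 1) ^ δ
      = Real.exp (Real.log (Real.Gamma x) + δ * Real.log (x - 1)) := by
        rw [Real.exp_add, Real.exp_log h0, ← Real.log_rpow (by linarith), Real.exp_log h1]
    _ ≤ Real.exp (Real.log (Real.Gamma (x + δ))) := Real.exp_le_exp.mpr key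
    _ = Real.Gamma (x + δ) := Real.exp_log (Real.Gamma_pos_of_pos hxd)

lemma gautschi : ∀ (n : ℕ) (δ x : ℝ), 0 < δ → δ ≤ n → 2 ≤ x →
    Real.Gamma x * (x - 1) ^ δ ≤ Real.Gamma (x + δ) := by
  intro n
  induction n with
  | zero => intro δ x h1 h2 _; exfalso; simp at h2; linarith
  | succ n ih =>
    intro δ x hδ0 hδn hx
    by_cases hδ1 : δ ≤ 1
    · exact gautschi_base hδ0 hδ1 hx
    · push_neg at hδ1
      have h1 : Real.Gamma (x + 1) * x ^ (δ - 1) ≤ Real.Gamma (x + 1 + (δ - 1)) := by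
        have := ih (δ - 1) (x + 1) (by linarith)
          (by push_cast at hδn ⊢; linarith) (by linarith)
        rwa [show x + 1 - 1 = x by ring] at this
      rw [show x + 1 + (δ - 1) = x + δ by ring] at h1
      have hrec : Real.Gamma (x + 1) = x * Real.Gamma x :=
        Real.Gamma_add_one (by positivity)
      have hG : 0 < Real.Gamma x := Real.Gamma_pos_of_pos (by linarith)
      have hb : (x - 1) ^ δ ≤ x * x ^ (δ - 1) := by
        have : (x - 1) ^ δ ≤ x ^ δ :=
          Real.rpow_le_rpow (by linarith) (by linarith) hδ0.le
        calc (x-1)^δ ≤ x ^ δ := this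
          _ = x * x ^ (δ - 1) := by
            rw [← Real.rpow_one_add' (by linarith) (by linarith)]; ring_nf
      calc Real.Gamma x * (x - 1) ^ δ ≤ Real.Gamma x * (x * x ^ (δ - 1)) := by
            exact mul_le_mul_of_nonneg_left hb hG.le
        _ = Real.Gamma (x + 1) * x ^ (δ - 1) := by rw [hrec]; ring
        _ ≤ Real.Gamma (x + δ) := h1

lemma gamma_ratio_tendsto {c δ : ℝ} (hc : 0 < c) (hδ : 0 < δ) :
    Tendsto (fun n : ℕ => Real.Gamma ((n : ℝ) + c) / Real.Gamma ((n : ℝ) + c + δ))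
      atTop (𝓝 0) := by
  have hup : Tendsto (fun n : ℕ => ((n : ℝ) + c - 1) ^ (-δ)) atTop (𝓝 0) := by
    apply (tendsto_rpow_neg_atTop hδ).comp
    have h := tendsto_atTop_add_const_right atTop (c - 1)
      (tendsto_natCast_atTop_atTop (R := ℝ))
    exact h.congr (fun n => by ring)
  apply squeeze_zero' (g := fun n : ℕ => ((n : ℝ) + c - 1) ^ (-δ)) _ _ hup
  · filter_upwards with n
    have h1 : (0:ℝ) < (n : ℝ) + c := by positivity
    have h2 : (0:ℝ) < (n : ℝ) + c + δ := by positivity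
    positivity
  · filter_upwards [eventually_ge_atTop 2] with n hn
    have hn2 : (2:ℝ) ≤ (n : ℝ) + c := by
      have : (2:ℝ) ≤ (n : ℝ) := by exact_mod_cast hn
      linarith
    have hb := gautschi ⌈δ⌉₊ δ ((n : ℝ) + c) hδ (Nat.le_ceil δ) hn2
    have hΓd : 0 < Real.Gamma ((n : ℝ) + c + δ) := Real.Gamma_pos_of_pos (by linarith)
    have hpow : (0:ℝ) < ((n : ℝ) + c - 1) ^ δ := Real.rpow_pos_of_pos (by linarith) δ
    rw [Real.rpow_neg (by linarith : (0:ℝ) ≤ (n : ℝ) + c - 1), inv_eq_one_div,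
      div_le_div_iff₀ hΓd hpow]
    linarith

theorem marginal_sums_to_one (α₁ β₁ r : ℝ) (hα₁ : 0 < α₁) (hβ₁ : 0 < β₁)
    (hr0 : 0 < r) (hr1 : r < 1) (x : ℕ → ℝ)
    (hx0 : x 0 = r / (β₁ + 1))
    (hx1 : x 1 = (β₁ / (α₁ + β₁ + 1)) * (r / (β₁ + 1) + (1 - r) / β₁))
    (hx : ∀ w : ℕ, 1 < w →
      x w = Real.Gamma ((w : ℝ) + β₁ / α₁) / Real.Gamma (β₁ / α₁) *
        (Real.Gamma (1 + (β₁ + 1) / α₁) / Real.Gamma ((w : ℝ) + 1 + (β₁ + 1) / α₁)) *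
        ((1 - r + β₁) / (β₁ * (β₁ + 1)))) :
    HasSum x 1 := by
  set c : ℝ := β₁ / α₁ with hcdef
  set d : ℝ := (β₁ + 1) / α₁ with hddef
  have hc : 0 < c := by positivity
  have hd : 0 < d := by positivity
  have hΓc : 0 < Real.Gamma c := Real.Gamma_pos_of_pos hc
  have hΓ1d : 0 < Real.Gamma (1 + d) := Real.Gamma_pos_of_pos (by linarith)
  set C : ℝ := α₁ * (Real.Gamma (1 + d) / Real.Gamma c) * ((1 - r + β₁) / (β₁ * (β₁ + 1)))
    with hCdef
  -- nonnegativity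
  have hnonneg : ∀ i : ℕ, 0 ≤ x i := by
    intro i
    match i with
    | 0 => rw [hx0]; positivity
    | 1 =>
      rw [hx1]
      have h1 : 0 < r / (β₁ + 1) + (1 - r) / β₁ := by
        have : 0 < r / (β₁ + 1) := by positivity
        have : 0 < (1 - r) / β₁ := by
          apply div_pos (by linarith) hβ₁
        linarith
      positivity
    | (m + 2) =>
      rw [hx (m + 2) (by omega)]
      have hm0 : (0:ℝ) ≤ ((m + 2 : ℕ) : ℝ) := Nat.cast_nonneg _
      have h1 : 0 < Real.Gamma (((m + 2 : ℕ) : ℝ) + c) :=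
        Real.Gamma_pos_of_pos (by linarith)
      have h2 : 0 < Real.Gamma (((m + 2 : ℕ) : ℝ) + 1 + d) :=
        Real.Gamma_pos_of_pos (by linarith)
      have h3 : 0 < (1 - r + β₁) / (β₁ * (β₁ + 1)) :=
        div_pos (by linarith) (by positivity)
      exact le_of_lt (mul_pos (mul_pos (div_pos h1 hΓc) (div_pos hΓ1d h2)) h3)
  rw [hasSum_iff_tendsto_nat_of_nonneg hnonneg]
  -- partial sums formula
  have hkey : ∀ n : ℕ, 2 ≤ n → ∑ i ∈ Finset.range n, x i =
      1 - C * (Real.Gamma ((n : ℝ) + c) / Real.Gamma ((n : ℝ) + d)) := by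
    intro n hn
    induction n, hn using Nat.le_induction with
    | base =>
      rw [Finset.sum_range_succ, Finset.sum_range_one, hx0, hx1]
      have e1 : ((2:ℕ):ℝ) + c = (c + 1) + 1 := by push_cast; ring
      have e2 : ((2:ℕ):ℝ) + d = (1 + d) + 1 := by push_cast; ring
      have g1 : Real.Gamma ((c+1)+1) = (c+1) * Real.Gamma (c+1) :=
        Real.Gamma_add_one (by linarith)
      have g2 : Real.Gamma (c+1) = c * Real.Gamma c := by
        have := Real.Gamma_add_one hc.ne'; linarith
      have g3 : Real.Gamma ((1+d)+1) = (1+d) * Real.Gamma (1+d) :=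
        Real.Gamma_add_one (by linarith)
      rw [e1, e2, g1, g2, g3]
      rw [hCdef, hcdef, hddef]
      have hA : α₁ + β₁ + 1 ≠ 0 := by positivity
      have hB : β₁ + 1 ≠ 0 := by positivity
      field_simp
      ring
    | succ n hn ih =>
      rw [Finset.sum_range_succ, ih, hx n (by omega)]
      have hΓnd : 0 < Real.Gamma ((n : ℝ) + d) := by
        have : (0:ℝ) ≤ (n:ℝ) := n.cast_nonneg
        exact Real.Gamma_pos_of_pos (by linarith)
      have e1 : ((n:ℕ):ℝ) + 1 + c = ((n : ℝ) + c) + 1 := by ring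
      have e2 : ((n:ℕ):ℝ) + 1 + d = ((n : ℝ) + d) + 1 := by ring
      have e1' : (((n+1:ℕ)):ℝ) + c = ((n : ℝ) + c) + 1 := by push_cast; ring
      have e2' : (((n+1:ℕ)):ℝ) + d = ((n : ℝ) + d) + 1 := by push_cast; ring
      have hn0 : (0:ℝ) ≤ (n:ℝ) := n.cast_nonneg
      have g4 : Real.Gamma (((n:ℝ)+c)+1) = ((n:ℝ)+c) * Real.Gamma ((n:ℝ)+c) :=
        Real.Gamma_add_one (by linarith)
      have g5 : Real.Gamma (((n:ℝ)+d)+1) = ((n:ℝ)+d) * Real.Gamma ((n:ℝ)+d) :=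
        Real.Gamma_add_one (by linarith)
      rw [e1', e2', e2, g4, g5, hCdef, hcdef, hddef]
      have hnd : ((n:ℝ) + (β₁+1)/α₁) ≠ 0 := by
        have hn0 : (0:ℝ) ≤ (n:ℝ) := n.cast_nonneg
        have : 0 < (β₁+1)/α₁ := by positivity
        linarith
      have hΓnd' : Real.Gamma ((n : ℝ) + (β₁+1)/α₁) ≠ 0 := by
        rw [hddef] at hΓnd; exact hΓnd.ne'
      field_simp
      ring
  -- convergence
  have hg : Tendsto (fun n : ℕ => Real.Gamma ((n : ℝ) + c) / Real.Gamma ((n : ℝ) + d))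
      atTop (𝓝 0) := by
    have hdc : d = c + (1 / α₁) := by rw [hcdef, hddef]; field_simp
    have := gamma_ratio_tendsto hc (show (0:ℝ) < 1 / α₁ by positivity)
    simpa [hdc, add_assoc] using this
  have : Tendsto (fun n : ℕ =>
      1 - C * (Real.Gamma ((n : ℝ) + c) / Real.Gamma ((n : ℝ) + d))) atTop (𝓝 1) := by
    have h2 : Tendsto (fun n : ℕ =>
        C * (Real.Gamma ((n : ℝ) + c) / Real.Gamma ((n : ℝ) + d))) atTop (𝓝 0) := by
      simpa using hg.const_mul C
    simpa using tendsto_const_nhds.sub h2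
  apply this.congr'
  filter_upwards [eventually_ge_atTop 2] with n hn
  exact (hkey n hn).symm
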